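/- Let M be an n×n Manin matrix over an associative unital (possibly noncommutative) ring R. Then: (a) if M' is obtained from M by interchanging two distinct columns, then det^col(M') = −det^col(M); (b) if two distinct columns of M coincide, then det^col(M) = 0; (c) if two distinct rows of M coincide, then det^col(M) = 0. -/

import Mathlib

open scoped BigOperators

/-- A matrix `M` over a (possibly noncommutative) ring is a *Manin matrix* if
entries of the same column commute and cross-commutators of 2×2 submatrices are equal. -/
def Matrix.IsManin {R : Type*} [Ring R] {n m : ℕ} (M : Matrix (Fin n) (Fin m) R) : Prop :=
  (∀ i k : Fin n, ∀ j : Fin m, M i j * M k j = M k j * M i j) ∧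
  (∀ i k : Fin n, ∀ j l : Fin m,
    M i j * M k l - M k l * M i j = M k j * M i l - M i l * M k j)

/-- Column determinant: factors multiplied in order of increasing column index. -/
noncomputable def Matrix.detCol {R : Type*} [Ring R] {n : ℕ}
    (M : Matrix (Fin n) (Fin n) R) : R :=
  ∑ σ : Equiv.Perm (Fin n),
    (Equiv.Perm.sign σ : ℤ) • ((List.finRange n).map (fun i => M (σ i) i)).prod

/-- Row determinant: factors multiplied in order of increasing row index. -/
noncomputable def Matrix.detRow {R : Type*} [Ring R] {n : ℕ}
    (M : Matrix (Fin n) (Fin n) R) : R :=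
  ∑ σ : Equiv.Perm (Fin n),
    (Equiv.Perm.sign σ : ℤ) • ((List.finRange n).map (fun i => M i (σ i))).prod

/-- Row permanent: factors multiplied in order of increasing row index. -/
noncomputable def Matrix.permRow {R : Type*} [Ring R] {n : ℕ}
    (M : Matrix (Fin n) (Fin n) R) : R :=
  ∑ σ : Equiv.Perm (Fin n), ((List.finRange n).map (fun i => M i (σ i))).prod

section ManinAux

variable {R : Type*} [Ring R] {n : ℕ}

/-- Generalized column determinant: columns multiplied in the order given by the list `L`. -/
noncomputable def ManinAux.D (M : Matrix (Fin n) (Fin n) R) (L : List (Fin n)) : R :=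
  ∑ σ : Equiv.Perm (Fin n),
    (Equiv.Perm.sign σ : ℤ) • (L.map (fun c => M (σ c) c)).prod

namespace ManinAux

lemma prod_decomp (M : Matrix (Fin n) (Fin n) R) (σ : Equiv.Perm (Fin n))
    (A B : List (Fin n)) (j k : Fin n) :
    ((A ++ j :: k :: B).map (fun c => M (σ c) c)).prod
      = (A.map (fun c => M (σ c) c)).prod *
        (M (σ j) j * (M (σ k) k * (B.map (fun c => M (σ c) c)).prod)) := by
  simp [List.prod_append, mul_assoc]

lemma D_swap_adjacent (M : Matrix (Fin n) (Fin n) R) (hM : M.IsManin)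
    (A B : List (Fin n)) (j k : Fin n) (hnd : (A ++ j :: k :: B).Nodup) :
    D M (A ++ j :: k :: B) = D M (A ++ k :: j :: B) := by
  classical
  have h2 : (j :: k :: B).Nodup := hnd.sublist (List.sublist_append_right A _)
  have hjk : j ≠ k := by
    intro h; subst h
    exact (List.nodup_cons.mp h2).1 (List.mem_cons_self)
  have hjB : j ∉ B := fun h => (List.nodup_cons.mp h2).1 (List.mem_cons_of_mem _ h)
  have hkB : k ∉ B :=
    (List.nodup_cons.mp (List.nodup_cons.mp h2).2).1
  have hdisj : A.Disjoint (j :: k :: B) := List.disjoint_of_nodup_append hnd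
  have hjA : j ∉ A := fun h => hdisj h (by simp)
  have hkA : k ∉ A := fun h => hdisj h (by simp)
  set s : Equiv.Perm (Fin n) := Equiv.swap j k with hs
  rw [← sub_eq_zero, D, D, ← Finset.sum_sub_distrib]
  apply Finset.sum_ninvolution (g := fun σ => σ * s)
  · intro σ
    -- sign computation
    have hsgn : ((Equiv.Perm.sign (σ * s) : ℤˣ) : ℤ) = -((Equiv.Perm.sign σ : ℤˣ) : ℤ) := by
      simp [hs, Equiv.Perm.sign_swap hjk]
    -- products over A and B are unchanged by composing with s
    have hfix : ∀ c : Fin n, c ∈ A ∨ c ∈ B → (σ * s) c = σ c := by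
      intro c hc
      have hcj : c ≠ j := by rintro rfl; rcases hc with h | h; exacts [hjA h, hjB h]
      have hck : c ≠ k := by rintro rfl; rcases hc with h | h; exacts [hkA h, hkB h]
      simp [hs, Equiv.swap_apply_of_ne_of_ne hcj hck]
    have hA : A.map (fun c => M ((σ * s) c) c) = A.map (fun c => M (σ c) c) :=
      List.map_congr_left (fun c hc => by rw [hfix c (Or.inl hc)])
    have hB : B.map (fun c => M ((σ * s) c) c) = B.map (fun c => M (σ c) c) :=
      List.map_congr_left (fun c hc => by rw [hfix c (Or.inr hc)])
    have hsj : (σ * s) j = σ k := by simp [hs]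
    have hsk : (σ * s) k = σ j := by simp [hs]
    set XA := (A.map (fun c => M (σ c) c)).prod
    set XB := (B.map (fun c => M (σ c) c)).prod
    have e1 : ((A ++ j :: k :: B).map (fun c => M (σ c) c)).prod
        = XA * (M (σ j) j * (M (σ k) k * XB)) := prod_decomp M σ A B j k
    have e2 : ((A ++ k :: j :: B).map (fun c => M (σ c) c)).prod
        = XA * (M (σ k) k * (M (σ j) j * XB)) := prod_decomp M σ A B k j
    have e3 : ((A ++ j :: k :: B).map (fun c => M ((σ * s) c) c)).prod
        = XA * (M (σ k) j * (M (σ j) k * XB)) := by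
      rw [prod_decomp M (σ * s) A B j k, hA, hB, hsj, hsk]
    have e4 : ((A ++ k :: j :: B).map (fun c => M ((σ * s) c) c)).prod
        = XA * (M (σ j) k * (M (σ k) j * XB)) := by
      rw [prod_decomp M (σ * s) A B k j, hA, hB, hsj, hsk]
    rw [e1, e2, e3, e4, hsgn]
    set z := ((Equiv.Perm.sign σ : ℤˣ) : ℤ)
    have core : XA * (M (σ j) j * (M (σ k) k * XB)) - XA * (M (σ k) k * (M (σ j) j * XB))
        - (XA * (M (σ k) j * (M (σ j) k * XB)) - XA * (M (σ j) k * (M (σ k) j * XB))) = 0 := by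
      have hman := hM.2 (σ j) (σ k) j k
      have expand : XA * (M (σ j) j * (M (σ k) k * XB)) - XA * (M (σ k) k * (M (σ j) j * XB))
          - (XA * (M (σ k) j * (M (σ j) k * XB)) - XA * (M (σ j) k * (M (σ k) j * XB)))
          = XA * (((M (σ j) j * M (σ k) k - M (σ k) k * M (σ j) j)
              - (M (σ k) j * M (σ j) k - M (σ j) k * M (σ k) j)) * XB) := by
        noncomm_ring
      rw [expand, hman, sub_self, zero_mul, mul_zero]
    have lhs_eq : z • (XA * (M (σ j) j * (M (σ k) k * XB)))
          - z • (XA * (M (σ k) k * (M (σ j) j * XB)))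
          + ((-z) • (XA * (M (σ k) j * (M (σ j) k * XB)))
            - (-z) • (XA * (M (σ j) k * (M (σ k) j * XB))))
        = z • (XA * (M (σ j) j * (M (σ k) k * XB)) - XA * (M (σ k) k * (M (σ j) j * XB))
          - (XA * (M (σ k) j * (M (σ j) k * XB)) - XA * (M (σ j) k * (M (σ k) j * XB)))) := by
      simp only [neg_smul, smul_sub]
      abel
    rw [lhs_eq, core, smul_zero]
  · intro σ _ heq
    have : s = 1 := mul_left_cancel (a := σ) (by simpa using heq)
    exact hjk (Equiv.swap_eq_one_iff.mp this)
  · intro σ; exact Finset.mem_univ _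
  · intro σ
    simp [hs, mul_assoc, Equiv.swap_mul_self]

lemma D_perm (M : Matrix (Fin n) (Fin n) R) (hM : M.IsManin)
    {L₁ L₂ : List (Fin n)} (h : L₁.Perm L₂) :
    ∀ A : List (Fin n), (A ++ L₁).Nodup → D M (A ++ L₁) = D M (A ++ L₂) := by
  induction h with
  | nil => intro A _; rfl
  | @cons x l₁ l₂ h ih =>
      intro A hnd
      rw [List.append_cons A x l₁, List.append_cons A x l₂]
      exact ih (A ++ [x]) (by rwa [← List.append_cons A x l₁])
  | swap x y l =>
      intro A hnd
      exact D_swap_adjacent M hM A l y x hnd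
  | trans h12 h23 ih1 ih2 =>
      intro A hnd
      rw [ih1 A hnd, ih2 A (((h12.append_left A).nodup_iff).mp hnd)]

lemma D_finRange (M : Matrix (Fin n) (Fin n) R) : D M (List.finRange n) = M.detCol := rfl

lemma D_perm' (M : Matrix (Fin n) (Fin n) R) (hM : M.IsManin)
    {L : List (Fin n)} (h : (List.finRange n).Perm L) :
    D M L = M.detCol := by
  have := D_perm M hM h [] (by simpa using List.nodup_finRange n)
  simpa using this.symm ▸ rfl

end ManinAux

end ManinAux

/-- for a Manin matrix `M`: (a) interchanging two distinct columns changes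
the sign of the column determinant; (b) if two distinct columns of `M` coincide then
`detCol M = 0`; (c) if two distinct rows of `M` coincide then `detCol M = 0`. -/
theorem detCol_alternating {R : Type*} [Ring R] {n : ℕ}
    (M : Matrix (Fin n) (Fin n) R) (hM : M.IsManin) :
    (∀ c₁ c₂ : Fin n, c₁ ≠ c₂ →
      (Matrix.of fun i j => M i (Equiv.swap c₁ c₂ j)).detCol = - M.detCol) ∧
    (∀ c₁ c₂ : Fin n, c₁ ≠ c₂ → (∀ i, M i c₁ = M i c₂) → M.detCol = 0) ∧
    (∀ r₁ r₂ : Fin n, r₁ ≠ r₂ → (∀ j, M r₁ j = M r₂ j) → M.detCol = 0) := by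
  classical
  refine ⟨?_, ?_, ?_⟩
  · -- (a) column swap
    intro c₁ c₂ hne
    set τ : Equiv.Perm (Fin n) := Equiv.swap c₁ c₂ with hτ
    have hLperm : (((List.finRange n).map τ)).Perm (List.finRange n) := by
      refine List.perm_of_nodup_nodup_toFinset_eq
        ((List.nodup_finRange n).map τ.injective) (List.nodup_finRange n) ?_
      ext x
      simp only [List.mem_toFinset, List.mem_map]
      constructor
      · intro _; exact List.mem_finRange x
      · intro _; exact ⟨τ⁻¹ x, List.mem_finRange _, by simp⟩
    have hD : ManinAux.D M ((List.finRange n).map τ) = M.detCol :=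
      ManinAux.D_perm' M hM hLperm.symm
    show (∑ σ : Equiv.Perm (Fin n), (Equiv.Perm.sign σ : ℤ) •
        ((List.finRange n).map (fun i => (Matrix.of fun i j => M i (τ j)) (σ i) i)).prod)
      = - M.detCol
    have key : ∀ σ : Equiv.Perm (Fin n),
        (Equiv.Perm.sign σ : ℤ) •
          ((List.finRange n).map (fun i => (Matrix.of fun i j => M i (τ j)) (σ i) i)).prod
        = -((Equiv.Perm.sign (σ * τ) : ℤ) •
            (((List.finRange n).map τ).map (fun c => M ((σ * τ) c) c)).prod) := by
      intro σ
      have hsgn : ((Equiv.Perm.sign (σ * τ) : ℤˣ) : ℤ) = -((Equiv.Perm.sign σ : ℤˣ) : ℤ) := by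
        simp [hτ, Equiv.Perm.sign_swap hne]
      have hmap : ((List.finRange n).map (fun i => (Matrix.of fun i j => M i (τ j)) (σ i) i))
          = ((List.finRange n).map τ).map (fun c => M ((σ * τ) c) c) := by
        rw [List.map_map]
        refine List.map_congr_left (fun i _ => ?_)
        simp [hτ, Equiv.swap_apply_self]
      rw [hmap, hsgn, neg_smul, neg_neg]
    set hfun : Equiv.Perm (Fin n) → R := fun π =>
      (Equiv.Perm.sign π : ℤ) • (((List.finRange n).map τ).map (fun c => M (π c) c)).prod
      with hhfun
    calc (∑ σ : Equiv.Perm (Fin n), (Equiv.Perm.sign σ : ℤ) •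
            ((List.finRange n).map (fun i => (Matrix.of fun i j => M i (τ j)) (σ i) i)).prod)
        = ∑ σ : Equiv.Perm (Fin n), -(hfun (σ * τ)) :=
          Finset.sum_congr rfl (fun σ _ => key σ)
      _ = -(∑ σ : Equiv.Perm (Fin n), hfun (σ * τ)) := Finset.sum_neg_distrib _
      _ = -(∑ π : Equiv.Perm (Fin n), hfun π) :=
          congrArg Neg.neg (Equiv.sum_comp (Equiv.mulRight τ) hfun)
      _ = - M.detCol := by rw [← hD]; rfl
  · -- (b) equal columns
    intro c₁ c₂ hne hcol
    set rest : List (Fin n) := ((List.finRange n).erase c₁).erase c₂ with hrest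
    set L : List (Fin n) := c₁ :: c₂ :: rest with hL
    have hperm : (List.finRange n).Perm L := by
      have h1 : (List.finRange n).Perm (c₁ :: (List.finRange n).erase c₁) :=
        List.perm_cons_erase (List.mem_finRange c₁)
      have hc₂ : c₂ ∈ (List.finRange n).erase c₁ :=
        (List.mem_erase_of_ne hne.symm).mpr (List.mem_finRange c₂)
      exact h1.trans ((List.perm_cons_erase hc₂).cons c₁)
    have hndL : L.Nodup := hperm.nodup (List.nodup_finRange n)
    have hc₁rest : c₁ ∉ rest := fun h => (List.nodup_cons.mp hndL).1 (by simp [hL, h])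
    have hc₂rest : c₂ ∉ rest :=
      (List.nodup_cons.mp (List.nodup_cons.mp hndL).2).1
    rw [← ManinAux.D_perm' M hM hperm, ManinAux.D]
    set s : Equiv.Perm (Fin n) := Equiv.swap c₁ c₂ with hs
    apply Finset.sum_ninvolution (g := fun σ => σ * s)
    · intro σ
      have hsgn : ((Equiv.Perm.sign (σ * s) : ℤˣ) : ℤ) = -((Equiv.Perm.sign σ : ℤˣ) : ℤ) := by
        simp [hs, Equiv.Perm.sign_swap hne]
      have hfix : rest.map (fun c => M ((σ * s) c) c) = rest.map (fun c => M (σ c) c) := by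
        refine List.map_congr_left (fun c hc => ?_)
        have hc1 : c ≠ c₁ := fun h => hc₁rest (h ▸ hc)
        have hc2 : c ≠ c₂ := fun h => hc₂rest (h ▸ hc)
        simp [hs, Equiv.swap_apply_of_ne_of_ne hc1 hc2]
      set X := (rest.map (fun c => M (σ c) c)).prod
      have e1 : (L.map (fun c => M (σ c) c)).prod
          = M (σ c₁) c₁ * (M (σ c₂) c₂ * X) := by simp [hL, mul_assoc]; rfl
      have e2 : (L.map (fun c => M ((σ * s) c) c)).prod
          = M (σ c₂) c₁ * (M (σ c₁) c₂ * X) := by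
        simp only [hL, List.map_cons, List.prod_cons, hfix]
        have h1 : (σ * s) c₁ = σ c₂ := by simp [hs]
        have h2 : (σ * s) c₂ = σ c₁ := by simp [hs]
        rw [h1, h2]
      rw [e1, e2, hsgn, neg_smul, ← sub_eq_add_neg, ← smul_sub]
      have : M (σ c₁) c₁ * (M (σ c₂) c₂ * X) - M (σ c₂) c₁ * (M (σ c₁) c₂ * X) = 0 := by
        rw [← hcol (σ c₂), ← hcol (σ c₁), ← mul_assoc, ← mul_assoc, hM.1 (σ c₁) (σ c₂) c₁,
          sub_self]
      rw [this, smul_zero]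
    · intro σ _ heq
      have : s = 1 := mul_left_cancel (a := σ) (by simpa using heq)
      exact hne (Equiv.swap_eq_one_iff.mp this)
    · intro σ; exact Finset.mem_univ _
    · intro σ; simp [hs, mul_assoc, Equiv.swap_mul_self]
  · -- (c) equal rows
    intro r₁ r₂ hne hrow
    set τ : Equiv.Perm (Fin n) := Equiv.swap r₁ r₂ with hτ
    have hτM : ∀ a c : Fin n, M (τ a) c = M a c := by
      intro a c
      by_cases h1 : a = r₁
      · subst h1; rw [hτ, Equiv.swap_apply_left]; exact (hrow c).symm
      by_cases h2 : a = r₂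
      · subst h2; rw [hτ, Equiv.swap_apply_right]; exact hrow c
      · rw [hτ, Equiv.swap_apply_of_ne_of_ne h1 h2]
    rw [Matrix.detCol]
    apply Finset.sum_ninvolution (g := fun σ => τ * σ)
    · intro σ
      have hsgn : ((Equiv.Perm.sign (τ * σ) : ℤˣ) : ℤ) = -((Equiv.Perm.sign σ : ℤˣ) : ℤ) := by
        simp [hτ, Equiv.Perm.sign_swap hne]
      have hmap : (List.finRange n).map (fun i => M ((τ * σ) i) i)
          = (List.finRange n).map (fun i => M (σ i) i) :=
        List.map_congr_left (fun i _ => by rw [Equiv.Perm.mul_apply, hτM])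
      rw [hmap, hsgn, neg_smul, add_neg_cancel]
    · intro σ _ heq
      have : τ = 1 := mul_right_cancel (b := σ) (by simpa using heq)
      exact hne (Equiv.swap_eq_one_iff.mp this)
    · intro σ; exact Finset.mem_univ _
    · intro σ; simp [hτ, ← mul_assoc, Equiv.swap_mul_self]
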